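/- Let T be a finite nonempty set, μ : T → ℝ≥0, 0 < θ ≤ 1, and define the equidistribution set M := { t ∈ T : μ(t) ≥ (1−θ)·μ(T)/#T } where μ(T) = (Σ_{t∈T} μ(t)²)^{1/2}. Then max_{t∈T\M} μ(t) ≤ μ(M) whenever μ(T) > 0, i.e., the equidistribution criterion satisfies the general marking criterion with M(x)=x. -/
import Mathlib


open scoped Classical in
/-- The equidistribution criterion set `M := {t ∈ T : μ(t) ≥ (1-θ) μ(T)/#T}` satisfies the
general marking criterion with `M(x) = x`, provided `μ(T) > 0`. -/
theorem stmt_4 {α : Type*} (T : Finset α) (hT : T.Nonempty) (μ : α → ℝ) (θ : ℝ)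
    (hμ : ∀ t ∈ T, 0 ≤ μ t) (hθ0 : 0 < θ) (hθ1 : θ ≤ 1)
    (hpos : 0 < Real.sqrt (∑ t ∈ T, μ t ^ 2)) :
    ∀ t ∈ T \ (T.filter fun s =>
        (1 - θ) * Real.sqrt (∑ t' ∈ T, μ t' ^ 2) / T.card ≤ μ s),
      μ t ≤ Real.sqrt (∑ t' ∈ T.filter (fun s =>
        (1 - θ) * Real.sqrt (∑ t'' ∈ T, μ t'' ^ 2) / T.card ≤ μ s), μ t' ^ 2) := by
  intro t ht
  obtain ⟨ts, hts, hmax⟩ := T.exists_max_image μ hT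
  have hts0 : 0 ≤ μ ts := hμ ts hts
  have hcard : (1 : ℝ) ≤ T.card := by exact_mod_cast hT.card_pos
  set S := Real.sqrt (∑ t' ∈ T, μ t' ^ 2) with hS
  -- S ≤ #T * μ ts
  have hsum : ∑ t' ∈ T, μ t' ^ 2 ≤ T.card * μ ts ^ 2 := by
    calc ∑ t' ∈ T, μ t' ^ 2 ≤ ∑ _t' ∈ T, μ ts ^ 2 :=
          Finset.sum_le_sum fun i hi => pow_le_pow_left₀ (hμ i hi) (hmax i hi) 2
      _ = T.card * μ ts ^ 2 := by rw [Finset.sum_const, nsmul_eq_mul]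
  have hSle : S ≤ T.card * μ ts := by
    rw [hS]
    have : Real.sqrt (∑ t' ∈ T, μ t' ^ 2) ≤ Real.sqrt ((T.card : ℝ) * μ ts ^ 2) :=
      Real.sqrt_le_sqrt hsum
    refine this.trans ?_
    rw [Real.sqrt_mul (by positivity), Real.sqrt_sq hts0]
    have h1 : Real.sqrt (T.card : ℝ) ≤ (T.card : ℝ) := by
      nlinarith [Real.sq_sqrt (by positivity : (0:ℝ) ≤ (T.card : ℝ)),
        Real.sqrt_nonneg ((T.card : ℝ))]
    exact mul_le_mul_of_nonneg_right h1 hts0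
  have hSnn : 0 ≤ S := Real.sqrt_nonneg _
  have hmem : ts ∈ T.filter fun s =>
      (1 - θ) * S / T.card ≤ μ s := by
    refine Finset.mem_filter.mpr ⟨hts, ?_⟩
    rw [div_le_iff₀ (by linarith)]
    nlinarith
  calc μ t ≤ μ ts := hmax t (Finset.mem_sdiff.mp ht).1
    _ = Real.sqrt (μ ts ^ 2) := (Real.sqrt_sq hts0).symm
    _ ≤ _ := Real.sqrt_le_sqrt (Finset.single_le_sum (fun i _ => sq_nonneg (μ i)) hmem)
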